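/- Let w be an N-periodic window with supporting length l(w) ≤ N/2 and l(w) ≥ 2, supporting interval starting at a(w). Then for any x ∈ ℂ^N and any 0 ≤ m ≤ N/L−1: N Σ_{k=0}^{N−1} |X_w(Lm,k)|² e^{2πik(l(w)−1)/N} = x(n_1) · conj(x(n_2)) · w(a(w)) · conj(w(a(w)+l(w)−1)), where n_1 ≡ Lm − a(w) (mod N) and n_2 ≡ Lm − a(w) − l(w) + 1 (mod N). -/

import Mathlib

/-- Multiple-window short-time Fourier transform. -/
noncomputable def stft {N : ℕ} [NeZero N] (L : ℕ) (x w : ZMod N → ℂ) (m k : ℕ) : ℂ :=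
  (N : ℂ)⁻¹ * ∑ n : ZMod N, x n * w (((L * m : ℕ) : ZMod N) - n) *
    Complex.exp (-(2 * Real.pi * Complex.I * (k : ℂ) * (n.val : ℂ)) / (N : ℂ))

/-- `N ∑_k |X_w(Lm,k)|² e^{2πik(l-1)/N} = x(n₁) conj(x(n₂)) w(a) conj(w(a+l-1))` where
`n₁ ≡ Lm - a` and `n₂ ≡ Lm - a - l + 1 (mod N)`. -/
lemma sum_exp_eq (N : ℕ) [NeZero N] (d : ℤ) :
    ∑ k ∈ Finset.range N, Complex.exp (2 * Real.pi * Complex.I * (k : ℂ) * (d : ℂ) / (N : ℂ)) =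
    if (d : ZMod N) = 0 then (N : ℂ) else 0 := by
  have hN : (N : ℂ) ≠ 0 := Nat.cast_ne_zero.mpr (NeZero.ne N)
  set ζ : ℂ := Complex.exp (2 * Real.pi * Complex.I * (d : ℂ) / (N : ℂ)) with hζ
  have hz : ∀ k : ℕ, Complex.exp (2 * Real.pi * Complex.I * (k:ℂ) * (d:ℂ) / (N:ℂ)) = ζ ^ k := by
    intro k
    rw [hζ, ← Complex.exp_nat_mul]
    congr 1
    ring
  simp only [hz]
  have key : ζ = 1 ↔ (d : ZMod N) = 0 := by
    rw [hζ, Complex.exp_eq_one_iff, ZMod.intCast_zmod_eq_zero_iff_dvd]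
    have h2 : (2 * Real.pi * Complex.I : ℂ) ≠ 0 := by
      simp [Real.pi_ne_zero, Complex.I_ne_zero]
    constructor
    · rintro ⟨n, hn⟩
      have : (d : ℂ) = n * N := by
        field_simp at hn
        apply mul_left_cancel₀ h2
        linear_combination (2 * Real.pi * Complex.I) * hn
      refine ⟨n, by rw [mul_comm]; exact_mod_cast this⟩
    · rintro ⟨n, hn⟩
      exact ⟨n, by rw [hn]; push_cast; field_simp⟩
  by_cases h1 : ζ = 1
  · simp [h1, key.mp h1]
  · rw [if_neg (fun h => h1 (key.mpr h))]
    rw [geom_sum_eq h1]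
    have : ζ ^ N = 1 := by
      rw [hζ, ← Complex.exp_nat_mul]
      have : (N:ℂ) * (2 * ↑Real.pi * Complex.I * ↑d / ↑N) = d * (2 * Real.pi * Complex.I) := by
        field_simp
      rw [this, Complex.exp_int_mul_two_pi_mul_I]
    simp [this]

theorem stmt9 (N L : ℕ) [NeZero N] (hL : 0 < L) (hdvd : L ∣ N)
    (w : ZMod N → ℂ) (a : ZMod N) (l : ℕ)
    (hl2 : 2 ≤ l) (hlN : l ≤ N / 2)
    (ha : w a ≠ 0) (hb : w (a + ((l - 1 : ℕ) : ZMod N)) ≠ 0)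
    (hsupp : ∀ n : ZMod N, (∀ j < l, n ≠ a + (j : ZMod N)) → w n = 0)
    (x : ZMod N → ℂ) (m : ℕ) (hm : m < N / L) :
    (N : ℂ) * ∑ k ∈ Finset.range N, ((‖stft L x w m k‖ ^ 2 : ℝ) : ℂ) *
        Complex.exp (2 * Real.pi * Complex.I * (k : ℂ) * ((l - 1 : ℕ) : ℂ) / (N : ℂ)) =
      x (((L * m : ℕ) : ZMod N) - a) *
        (starRingEnd ℂ) (x (((L * m : ℕ) : ZMod N) - a - ((l - 1 : ℕ) : ZMod N))) *
        w a * (starRingEnd ℂ) (w (a + ((l - 1 : ℕ) : ZMod N))) := by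
  classical
  have hN : (N : ℂ) ≠ 0 := Nat.cast_ne_zero.mpr (NeZero.ne N)
  set c : ZMod N := ((L * m : ℕ) : ZMod N) with hc
  set c₀ : ZMod N := ((l - 1 : ℕ) : ZMod N) with hc0
  set T : ZMod N → ℂ := fun n => x n * w (c - n) with hT
  have hexp : ∀ (k : ℕ) (n n' : ZMod N),
      Complex.exp (-(2*Real.pi*Complex.I*(k:ℂ)*((n.val:ℕ):ℂ))/(N:ℂ)) *
      (starRingEnd ℂ) (Complex.exp (-(2*Real.pi*Complex.I*(k:ℂ)*((n'.val:ℕ):ℂ))/(N:ℂ))) *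
      Complex.exp (2*Real.pi*Complex.I*(k:ℂ)*((l-1:ℕ):ℂ)/(N:ℂ)) =
      Complex.exp (2*Real.pi*Complex.I*(k:ℂ)*((((l-1:ℕ):ℤ) - (n.val:ℤ) + (n'.val:ℤ) : ℤ):ℂ)/(N:ℂ)) := by
    intro k n n'
    rw [← Complex.exp_conj, ← Complex.exp_add, ← Complex.exp_add]
    congr 1
    have h1 : (starRingEnd ℂ) (-(2*Real.pi*Complex.I*(k:ℂ)*((n'.val:ℕ):ℂ))/(N:ℂ)) =
        (2*Real.pi*Complex.I*(k:ℂ)*((n'.val:ℕ):ℂ))/(N:ℂ) := by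
      simp only [map_div₀, map_neg, map_mul, Complex.conj_I, Complex.conj_ofReal,
        Complex.conj_natCast, map_ofNat]
      ring
    rw [h1]
    push_cast
    field_simp
    ring
  have hterm : ∀ k : ℕ,
      ((‖stft L x w m k‖ ^ 2 : ℝ) : ℂ) *
        Complex.exp (2 * Real.pi * Complex.I * (k : ℂ) * ((l - 1 : ℕ) : ℂ) / (N : ℂ)) =
      (N:ℂ)⁻¹ * (N:ℂ)⁻¹ * ∑ n : ZMod N, ∑ n' : ZMod N, T n * (starRingEnd ℂ) (T n') *
        Complex.exp (2 * Real.pi * Complex.I * (k:ℂ) *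
          ((((l-1:ℕ):ℤ) - (n.val:ℤ) + (n'.val:ℤ) : ℤ) : ℂ) / (N:ℂ)) := by
    intro k
    have hsq : ((‖stft L x w m k‖^2 : ℝ) : ℂ) =
        stft L x w m k * (starRingEnd ℂ) (stft L x w m k) := by
      rw [Complex.mul_conj, Complex.normSq_eq_norm_sq]
    rw [hsq]
    simp only [stft, ← hc]
    rw [map_mul, map_sum]
    rw [Finset.mul_sum, Finset.mul_sum, Finset.sum_mul_sum, Finset.sum_mul]
    rw [Finset.mul_sum]
    refine Finset.sum_congr rfl fun n _ => ?_
    rw [Finset.sum_mul, Finset.mul_sum]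
    refine Finset.sum_congr rfl fun n' _ => ?_
    rw [← hexp k n n']
    simp only [map_mul, map_inv₀, Complex.conj_natCast, hT]
    ring
  simp only [hterm]
  rw [Finset.mul_sum]
  have hconst : ∀ S : ℂ, (N:ℂ) * ((N:ℂ)⁻¹ * (N:ℂ)⁻¹ * S) = (N:ℂ)⁻¹ * S := by
    intro S
    field_simp
  simp only [hconst]
  rw [← Finset.mul_sum]
  have hswap : (∑ k ∈ Finset.range N, ∑ n : ZMod N, ∑ n' : ZMod N,
      T n * (starRingEnd ℂ) (T n') *
        Complex.exp (2 * Real.pi * Complex.I * (k:ℂ) *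
          ((((l-1:ℕ):ℤ) - (n.val:ℤ) + (n'.val:ℤ) : ℤ) : ℂ) / (N:ℂ))) =
      ∑ n' : ZMod N, ∑ n : ZMod N, T n * (starRingEnd ℂ) (T n') *
        (∑ k ∈ Finset.range N, Complex.exp (2 * Real.pi * Complex.I * (k:ℂ) *
          ((((l-1:ℕ):ℤ) - (n.val:ℤ) + (n'.val:ℤ) : ℤ) : ℂ) / (N:ℂ))) := by
    calc (∑ k ∈ Finset.range N, ∑ n : ZMod N, ∑ n' : ZMod N,
        T n * (starRingEnd ℂ) (T n') *
          Complex.exp (2 * Real.pi * Complex.I * (k:ℂ) *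
            ((((l-1:ℕ):ℤ) - (n.val:ℤ) + (n'.val:ℤ) : ℤ) : ℂ) / (N:ℂ)))
        = ∑ n : ZMod N, ∑ n' : ZMod N, ∑ k ∈ Finset.range N,
            T n * (starRingEnd ℂ) (T n') *
              Complex.exp (2 * Real.pi * Complex.I * (k:ℂ) *
                ((((l-1:ℕ):ℤ) - (n.val:ℤ) + (n'.val:ℤ) : ℤ) : ℂ) / (N:ℂ)) := by
          rw [Finset.sum_comm]
          exact Finset.sum_congr rfl fun n _ => Finset.sum_comm
      _ = _ := by
          rw [Finset.sum_comm]
          exact Finset.sum_congr rfl fun n' _ => Finset.sum_congr rfl fun n _ =>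
            (Finset.mul_sum _ _ _).symm
  rw [hswap]
  have h2l : 2 * l ≤ N := by
    have := (Nat.le_div_iff_mul_le (by norm_num : 0 < 2)).mp hlN
    omega
  have hcond : ∀ n n' : ZMod N,
      (((((l-1:ℕ):ℤ) - (n.val:ℤ) + (n'.val:ℤ) : ℤ) : ZMod N) = 0) ↔ n = n' + c₀ := by
    intro n n'
    push_cast [ZMod.natCast_val, ZMod.intCast_cast, ZMod.cast_id]
    rw [← hc0]
    constructor <;> intro h <;> linear_combination -h
  simp only [sum_exp_eq, hcond, mul_ite, mul_zero, Finset.sum_ite_eq', Finset.mem_univ,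
    if_true]
  rw [Finset.mul_sum]
  have hcollapse : ∀ A : ℂ, (N:ℂ)⁻¹ * (A * (N:ℂ)) = A := by
    intro A
    field_simp
  simp only [hcollapse]
  rw [Finset.sum_eq_single (c - a - c₀)]
  · have e1 : c - a - c₀ + c₀ = c - a := by ring
    have e2 : c - (c - a) = a := by ring
    have e3 : c - (c - a - c₀) = a + c₀ := by ring
    simp only [hT]
    rw [e1, e2, e3, map_mul]
    ring
  · intro b _ hb0
    by_cases hw1 : w (c - (b + c₀)) = 0
    · simp [hT, hw1]
    by_cases hw2 : w (c - b) = 0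
    · simp [hT, hw2]
    exfalso
    have h1 : ¬ (∀ j < l, c - (b + c₀) ≠ a + (j : ZMod N)) := fun h => hw1 (hsupp _ h)
    have h2 : ¬ (∀ j < l, c - b ≠ a + (j : ZMod N)) := fun h => hw2 (hsupp _ h)
    push_neg at h1 h2
    obtain ⟨j, hj, hje⟩ := h1
    obtain ⟨j', hj', hj'e⟩ := h2
    have hcast : (j' : ZMod N) = ((j + (l-1) : ℕ) : ZMod N) := by
      push_cast
      rw [← hc0]
      linear_combination hje - hj'e
    have hval : j' = j + (l - 1) := by
      have hv := congrArg ZMod.val hcast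
      rwa [ZMod.val_cast_of_lt (by omega), ZMod.val_cast_of_lt (by omega)] at hv
    have hj0 : j = 0 ∧ j' = l - 1 := by omega
    apply hb0
    rw [hj0.2] at hj'e
    rw [← hc0] at hj'e
    linear_combination -hj'e
  · intro h
    exact absurd (Finset.mem_univ _) h
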